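/- Let (𝒮, 𝒜, P*, r, H) be a finite-horizon MDP with global Q*-gap gap* > 0, and let (P̃, r̃) satisfy, for all (s,a) and all h with 0 ≤ h ≤ H−2, ‖P̃_h(·|s,a) − P*_h(·|s,a)‖₁ ≤ gap*/(2H(H−h−1)) and |r̃_h(s,a) − r_h(s,a)| ≤ gap*/(4H), with r̃_{H−1} = r_{H−1}. Let π̃ be any deterministic Markov policy that is optimal for (P̃,r̃) at every state and horizon. Then for every (s,h), every a* ∈ A*_h(s), and every a ∉ A*_h(s): Q_h^{π̃,P̃,r̃}(s,a*) − Q_h^{π̃,P̃,r̃}(s,a) ≥ gap*·(h+1)/H > 0. -/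

import Mathlib

/-- A probability mass function on a finite type, as a real-valued function. -/
def IsPMF {S : Type*} [Fintype S] (p : S → ℝ) : Prop :=
  (∀ s, 0 ≤ p s) ∧ ∑ s, p s = 1

/-- ℓ₁ distance between two functions on a finite type. -/
noncomputable def l1dist {S : Type*} [Fintype S] (p q : S → ℝ) : ℝ :=
  ∑ s, |p s - q s|

/-- Value function of a deterministic Markov policy, by backward recursion on the
number `t` of remaining steps; the value at stage `h` with horizon `H` is
`Vpi P r pol (H - h) h`. -/
noncomputable def Vpi {S A : Type*} [Fintype S]
    (P : ℕ → S → A → S → ℝ) (r : ℕ → S → A → ℝ) (pol : ℕ → S → A) :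
    ℕ → ℕ → S → ℝ
  | 0, _, _ => 0
  | t + 1, h, s =>
      r h s (pol h s) + ∑ s' : S, P h s (pol h s) s' * Vpi P r pol t (h + 1) s'

/-- Action-value function of a deterministic Markov policy in the horizon-`H` MDP. -/
noncomputable def Qpi {S A : Type*} [Fintype S]
    (P : ℕ → S → A → S → ℝ) (r : ℕ → S → A → ℝ) (pol : ℕ → S → A)
    (H h : ℕ) (s : S) (a : A) : ℝ :=
  r h s a + ∑ s' : S, P h s a s' * Vpi P r pol (H - (h + 1)) (h + 1) s'

/-- Optimal value function: supremum over all deterministic Markov policies. -/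
noncomputable def Vstar {S A : Type*} [Fintype S]
    (P : ℕ → S → A → S → ℝ) (r : ℕ → S → A → ℝ) (H h : ℕ) (s : S) : ℝ :=
  ⨆ pol : ℕ → S → A, Vpi P r pol (H - h) h s

/-- Optimal action-value function. -/
noncomputable def Qstar {S A : Type*} [Fintype S]
    (P : ℕ → S → A → S → ℝ) (r : ℕ → S → A → ℝ) (H h : ℕ) (s : S) (a : A) : ℝ :=
  r h s a + ∑ s' : S, P h s a s' * Vstar P r H (h + 1) s'

/-- The set of optimal actions `A*_h(s) = argmax_a Q*_h(s,a)`. -/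
def OptActions {S A : Type*} [Fintype S]
    (P : ℕ → S → A → S → ℝ) (r : ℕ → S → A → ℝ) (H h : ℕ) (s : S) : Set A :=
  {a | ∀ a', Qstar P r H h s a' ≤ Qstar P r H h s a}

section Aux

variable {S A : Type*} [Fintype S] [Fintype A] [Nonempty S] [Nonempty A]

/-- Optimal value by backward recursion. -/
noncomputable def Wopt (P : ℕ → S → A → S → ℝ) (r : ℕ → S → A → ℝ) :
    ℕ → ℕ → S → ℝ
  | 0, _, _ => 0
  | t + 1, h, s => ⨆ a, (r h s a + ∑ s' : S, P h s a s' * Wopt P r t (h + 1) s')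

lemma vpi_le_wopt (P : ℕ → S → A → S → ℝ) (r : ℕ → S → A → ℝ) (H : ℕ)
    (hP : ∀ h, h + 1 < H → ∀ s a s', 0 ≤ P h s a s') (pol : ℕ → S → A) :
    ∀ t h, h + t ≤ H → ∀ s, Vpi P r pol t h s ≤ Wopt P r t h s := by
  intro t
  induction t with
  | zero => intro h _ s; simp [Vpi, Wopt]
  | succ t ih =>
    intro h hht s
    have hsum : ∑ s' : S, P h s (pol h s) s' * Vpi P r pol t (h + 1) s'
        ≤ ∑ s' : S, P h s (pol h s) s' * Wopt P r t (h + 1) s' := by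
      rcases Nat.eq_zero_or_pos t with h0 | hpos
      · subst h0; simp [Vpi, Wopt]
      · refine Finset.sum_le_sum fun s' _ => ?_
        exact mul_le_mul_of_nonneg_left (ih (h + 1) (by omega) s')
          (hP h (by omega) s (pol h s) s')
    have hb : BddAbove (Set.range fun a =>
        r h s a + ∑ s' : S, P h s a s' * Wopt P r t (h + 1) s') :=
      (Set.finite_range _).bddAbove
    calc Vpi P r pol (t + 1) h s
        = r h s (pol h s) + ∑ s' : S, P h s (pol h s) s' * Vpi P r pol t (h + 1) s' := by
          simp [Vpi]
      _ ≤ r h s (pol h s) + ∑ s' : S, P h s (pol h s) s' * Wopt P r t (h + 1) s' := by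
          linarith
      _ ≤ ⨆ a, (r h s a + ∑ s' : S, P h s a s' * Wopt P r t (h + 1) s') :=
          le_ciSup hb (pol h s)
      _ = Wopt P r (t + 1) h s := by simp [Wopt]

/-- Greedy policy w.r.t. `Wopt`. -/
noncomputable def greedy (P : ℕ → S → A → S → ℝ) (r : ℕ → S → A → ℝ) (H : ℕ) :
    ℕ → S → A := fun h s =>
  Classical.choose ((Finset.univ : Finset A).exists_max_image
    (fun a => r h s a + ∑ s' : S, P h s a s' * Wopt P r (H - (h + 1)) (h + 1) s')
    Finset.univ_nonempty)

lemma greedy_spec (P : ℕ → S → A → S → ℝ) (r : ℕ → S → A → ℝ) (H h : ℕ) (s : S) :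
    ∀ a, r h s a + ∑ s' : S, P h s a s' * Wopt P r (H - (h + 1)) (h + 1) s'
      ≤ r h s (greedy P r H h s)
        + ∑ s' : S, P h s (greedy P r H h s) s' * Wopt P r (H - (h + 1)) (h + 1) s' := by
  intro a
  have := Classical.choose_spec ((Finset.univ : Finset A).exists_max_image
    (fun a => r h s a + ∑ s' : S, P h s a s' * Wopt P r (H - (h + 1)) (h + 1) s')
    Finset.univ_nonempty)
  exact this.2 a (Finset.mem_univ a)

lemma vpi_greedy (P : ℕ → S → A → S → ℝ) (r : ℕ → S → A → ℝ) (H : ℕ) :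
    ∀ t h, h + t = H → ∀ s, Vpi P r (greedy P r H) t h s = Wopt P r t h s := by
  intro t
  induction t with
  | zero => intro h _ s; simp [Vpi, Wopt]
  | succ t ih =>
    intro h hh s
    have hHt : H - (h + 1) = t := by omega
    set g := greedy P r H with hg
    have hsum : ∑ s' : S, P h s (g h s) s' * Vpi P r g t (h + 1) s'
        = ∑ s' : S, P h s (g h s) s' * Wopt P r t (h + 1) s' :=
      Finset.sum_congr rfl fun s' _ => by rw [ih (h + 1) (by omega) s']
    have hmax : ∀ a, r h s a + ∑ s' : S, P h s a s' * Wopt P r t (h + 1) s'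
        ≤ r h s (g h s) + ∑ s' : S, P h s (g h s) s' * Wopt P r t (h + 1) s' := by
      have := greedy_spec P r H h s
      rw [hHt] at this
      exact this
    have hb : BddAbove (Set.range fun a =>
        r h s a + ∑ s' : S, P h s a s' * Wopt P r t (h + 1) s') :=
      (Set.finite_range _).bddAbove
    have hsup : (⨆ a, (r h s a + ∑ s' : S, P h s a s' * Wopt P r t (h + 1) s'))
        = r h s (g h s) + ∑ s' : S, P h s (g h s) s' * Wopt P r t (h + 1) s' :=
      le_antisymm (ciSup_le hmax) (le_ciSup hb (g h s))
    calc Vpi P r g (t + 1) h s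
        = r h s (g h s) + ∑ s' : S, P h s (g h s) s' * Vpi P r g t (h + 1) s' := by
          simp [Vpi]
      _ = r h s (g h s) + ∑ s' : S, P h s (g h s) s' * Wopt P r t (h + 1) s' := by rw [hsum]
      _ = ⨆ a, (r h s a + ∑ s' : S, P h s a s' * Wopt P r t (h + 1) s') := hsup.symm
      _ = Wopt P r (t + 1) h s := by simp [Wopt]

lemma vstar_eq_wopt (P : ℕ → S → A → S → ℝ) (r : ℕ → S → A → ℝ) (H : ℕ)
    (hP : ∀ h, h + 1 < H → ∀ s a s', 0 ≤ P h s a s') :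
    ∀ h, h ≤ H → ∀ s, Vstar P r H h s = Wopt P r (H - h) h s := by
  intro h hh s
  refine le_antisymm (ciSup_le fun pol => vpi_le_wopt P r H hP pol (H - h) h (by omega) s) ?_
  have hb : BddAbove (Set.range fun pol : ℕ → S → A => Vpi P r pol (H - h) h s) := by
    refine ⟨Wopt P r (H - h) h s, ?_⟩
    rintro x ⟨pol, rfl⟩
    exact vpi_le_wopt P r H hP pol (H - h) h (by omega) s
  calc Wopt P r (H - h) h s = Vpi P r (greedy P r H) (H - h) h s :=
        (vpi_greedy P r H (H - h) h (by omega) s).symm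
    _ ≤ Vstar P r H h s := le_ciSup hb (greedy P r H)

lemma vstar_top (P : ℕ → S → A → S → ℝ) (r : ℕ → S → A → ℝ) (H : ℕ) (s : S) :
    Vstar P r H H s = 0 := by
  unfold Vstar
  simp [Nat.sub_self, Vpi, ciSup_const]

lemma vstar_bellman (P : ℕ → S → A → S → ℝ) (r : ℕ → S → A → ℝ) (H : ℕ)
    (hP : ∀ h, h + 1 < H → ∀ s a s', 0 ≤ P h s a s') :
    ∀ h, h < H → ∀ s, Vstar P r H h s = ⨆ a, Qstar P r H h s a := by
  intro h hh s
  have h1 : H - h = (H - (h + 1)) + 1 := by omega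
  rw [vstar_eq_wopt P r H hP h (by omega) s, h1]
  have : ∀ a : A, Qstar P r H h s a
      = r h s a + ∑ s' : S, P h s a s' * Wopt P r (H - (h + 1)) (h + 1) s' := by
    intro a
    unfold Qstar
    congr 1
    refine Finset.sum_congr rfl fun s' _ => ?_
    rw [vstar_eq_wopt P r H hP (h + 1) (by omega) s']
  simp only [Wopt, this]

lemma vpi_mem (P : ℕ → S → A → S → ℝ) (r : ℕ → S → A → ℝ) (H : ℕ)
    (hP : ∀ h, h + 1 < H → ∀ s a, IsPMF (P h s a))
    (hr : ∀ h, h < H → ∀ s a, r h s a ∈ Set.Icc (0 : ℝ) 1) (pol : ℕ → S → A) :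
    ∀ t h, h + t ≤ H → ∀ s, Vpi P r pol t h s ∈ Set.Icc (0 : ℝ) t := by
  intro t
  induction t with
  | zero => intro h _ s; simp [Vpi]
  | succ t ih =>
    intro h hht s
    obtain ⟨hr0, hr1⟩ := hr h (by omega) s (pol h s)
    have hsum : ∑ s' : S, P h s (pol h s) s' * Vpi P r pol t (h + 1) s' ∈
        Set.Icc (0 : ℝ) t := by
      rcases Nat.eq_zero_or_pos t with h0 | hpos
      · subst h0; simp [Vpi]
      · obtain ⟨hPn, hPs⟩ := hP h (by omega) s (pol h s)
        constructor
        · refine Finset.sum_nonneg fun s' _ => mul_nonneg (hPn s') ?_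
          exact (ih (h + 1) (by omega) s').1
        · calc ∑ s' : S, P h s (pol h s) s' * Vpi P r pol t (h + 1) s'
              ≤ ∑ s' : S, P h s (pol h s) s' * t := by
                refine Finset.sum_le_sum fun s' _ => ?_
                exact mul_le_mul_of_nonneg_left (ih (h + 1) (by omega) s').2 (hPn s')
            _ = (t : ℝ) := by rw [← Finset.sum_mul, hPs, one_mul]
    constructor
    · have : Vpi P r pol (t + 1) h s
          = r h s (pol h s) + ∑ s' : S, P h s (pol h s) s' * Vpi P r pol t (h + 1) s' := by
        simp [Vpi]
      rw [this]
      have := hsum.1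
      linarith
    · have : Vpi P r pol (t + 1) h s
          = r h s (pol h s) + ∑ s' : S, P h s (pol h s) s' * Vpi P r pol t (h + 1) s' := by
        simp [Vpi]
      rw [this]
      have := hsum.2
      push_cast
      linarith

lemma abs_ciSup_sub {f g : A → ℝ} {d : ℝ} (hfg : ∀ a, |f a - g a| ≤ d) :
    |(⨆ a, f a) - ⨆ a, g a| ≤ d := by
  have hbf : BddAbove (Set.range f) := (Set.finite_range _).bddAbove
  have hbg : BddAbove (Set.range g) := (Set.finite_range _).bddAbove
  rw [abs_sub_le_iff]
  constructor
  · rw [sub_le_iff_le_add]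
    refine ciSup_le fun a => ?_
    have h1 := (abs_le.mp (hfg a)).2
    have h2 : g a ≤ ⨆ a, g a := le_ciSup hbg a
    linarith
  · rw [sub_le_iff_le_add]
    refine ciSup_le fun a => ?_
    have h1 := (abs_le.mp (hfg a)).1
    have h2 : f a ≤ ⨆ a, f a := le_ciSup hbf a
    linarith

end Aux

set_option maxHeartbeats 1000000 in
/-- gap preservation under perturbation.
For any policy optimal for the perturbed MDP `(P̃, r̃)` at every state and horizon,
the perturbed action-values still separate optimal from suboptimal actions of the
true MDP by at least `gap*·(h+1)/H > 0`. -/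
theorem perturbed_Q_gap_lower_bound
    {𝒮 𝒜 : Type*} [Fintype 𝒮] [Fintype 𝒜] [Nonempty 𝒮] [Nonempty 𝒜]
    (H : ℕ) (hH : 1 ≤ H)
    (Pstar : ℕ → 𝒮 → 𝒜 → 𝒮 → ℝ) (r : ℕ → 𝒮 → 𝒜 → ℝ)
    (Pt : ℕ → 𝒮 → 𝒜 → 𝒮 → ℝ) (rt : ℕ → 𝒮 → 𝒜 → ℝ)
    (hPstar : ∀ h, h + 1 < H → ∀ s a, IsPMF (Pstar h s a))
    (hPt : ∀ h, h + 1 < H → ∀ s a, IsPMF (Pt h s a))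
    (hr : ∀ h, h < H → ∀ s a, r h s a ∈ Set.Icc (0 : ℝ) 1)
    (hrt : ∀ h, h < H → ∀ s a, rt h s a ∈ Set.Icc (0 : ℝ) 1)
    (gapstar : ℝ) (hgap_pos : 0 < gapstar)
    (hgap : ∀ h, h < H → ∀ s a, a ∉ OptActions Pstar r H h s →
      gapstar ≤ (⨆ a', Qstar Pstar r H h s a') - Qstar Pstar r H h s a)
    (hPclose : ∀ h, h + 1 < H → ∀ s a,
      l1dist (Pt h s a) (Pstar h s a) ≤ gapstar / (2 * H * ((H : ℝ) - h - 1)))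
    (hrclose : ∀ h, h + 1 < H → ∀ s a,
      |rt h s a - r h s a| ≤ gapstar / (4 * H))
    (hrlast : ∀ s a, rt (H - 1) s a = r (H - 1) s a)
    (polt : ℕ → 𝒮 → 𝒜)
    (hopt : ∀ h, h < H → ∀ s, Vpi Pt rt polt (H - h) h s = Vstar Pt rt H h s) :
    ∀ h, h < H → ∀ s, ∀ astar ∈ OptActions Pstar r H h s,
      ∀ a, a ∉ OptActions Pstar r H h s →
        gapstar * ((h : ℝ) + 1) / H
            ≤ Qpi Pt rt polt H h s astar - Qpi Pt rt polt H h s a ∧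
          0 < gapstar * ((h : ℝ) + 1) / H := by
  have hPtn : ∀ h', h' + 1 < H → ∀ s a s', 0 ≤ Pt h' s a s' :=
    fun h' hh s a s' => (hPt h' hh s a).1 s'
  have hPsn : ∀ h', h' + 1 < H → ∀ s a s', 0 ≤ Pstar h' s a s' :=
    fun h' hh s a s' => (hPstar h' hh s a).1 s'
  have hHpos : (0 : ℝ) < H := by exact_mod_cast hH
  have hH0 : (H : ℝ) ≠ 0 := ne_of_gt hHpos
  -- perturbed Qpi equals perturbed Qstar
  have hQeq : ∀ h', h' < H → ∀ s a, Qpi Pt rt polt H h' s a = Qstar Pt rt H h' s a := by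
    intro h' hh' s a
    simp only [Qpi, Qstar]
    congr 1
    refine Finset.sum_congr rfl fun s' _ => ?_
    congr 1
    rcases lt_or_ge (h' + 1) H with hlt | hge
    · exact hopt (h' + 1) hlt s'
    · have h0 : H - (h' + 1) = 0 := by omega
      have h1 : h' + 1 = H := by omega
      rw [h0, h1, vstar_top]
      simp [Vpi]
  -- main perturbation bound, by induction on remaining steps
  have main : ∀ t h', h' + t + 1 = H → ∀ s a,
      |Qpi Pt rt polt H h' s a - Qstar Pstar r H h' s a|
        ≤ ((H : ℝ) - 1 - h') * gapstar / (2 * H) := by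
    intro t
    induction t with
    | zero =>
      intro h' hh' s a
      have h1 : h' + 1 = H := by omega
      have h0 : H - (h' + 1) = 0 := by omega
      have hQp : Qpi Pt rt polt H h' s a = rt h' s a := by
        simp [Qpi, h0, Vpi]
      have hQs : Qstar Pstar r H h' s a = r h' s a := by
        simp only [Qstar]
        have : ∑ s' : 𝒮, Pstar h' s a s' * Vstar Pstar r H (h' + 1) s' = 0 := by
          refine Finset.sum_eq_zero fun s' _ => ?_
          rw [h1, vstar_top, mul_zero]
        rw [this, add_zero]
      have hrl : rt h' s a = r h' s a := by
        have := hrlast s a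
        rwa [show H - 1 = h' by omega] at this
      have hcast : (h' : ℝ) = (H : ℝ) - 1 := by
        have := congrArg (Nat.cast (R := ℝ)) h1
        push_cast at this
        linarith
      have hz : ((H : ℝ) - 1 - h') = 0 := by rw [hcast]; ring
      rw [hQp, hQs, hrl, sub_self, abs_zero, hz]
      simp
    | succ t ih =>
      intro h' hh' s a
      have hh1 : h' + 1 < H := by omega
      have hHt : H - (h' + 1) = t + 1 := by omega
      set M : ℝ := (t : ℝ) + 1 with hMdef
      have hMpos : (0 : ℝ) < M := by positivity
      have hM0 : M ≠ 0 := ne_of_gt hMpos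
      have hMeq : (H : ℝ) - h' - 1 = M := by
        have := congrArg (Nat.cast (R := ℝ)) hh'
        push_cast at this
        rw [hMdef]; linarith
      -- V-level bound at h'+1
      have hVdiff : ∀ s', |Vpi Pt rt polt (H - (h' + 1)) (h' + 1) s'
          - Vstar Pstar r H (h' + 1) s'| ≤ ((H : ℝ) - 2 - h') * gapstar / (2 * H) := by
        intro s'
        rw [hopt (h' + 1) hh1 s', vstar_bellman Pt rt H hPtn (h' + 1) hh1 s',
          vstar_bellman Pstar r H hPsn (h' + 1) hh1 s']
        refine abs_ciSup_sub fun a' => ?_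
        rw [← hQeq (h' + 1) hh1 s' a']
        have hihb := ih (h' + 1) (by omega) s' a'
        have hcast : ((H : ℝ) - 1 - ((h' + 1 : ℕ) : ℝ)) = (H : ℝ) - 2 - h' := by
          push_cast; ring
        rwa [hcast] at hihb
      -- range of perturbed value
      have hVt : ∀ s', Vpi Pt rt polt (H - (h' + 1)) (h' + 1) s' ∈ Set.Icc (0 : ℝ) M := by
        intro s'
        have := vpi_mem Pt rt H hPt hrt polt (t + 1) (h' + 1) (by omega) s'
        rw [hHt]
        constructor
        · exact this.1
        · have h2 := this.2
          rw [hMdef]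
          push_cast at h2
          linarith
      have hPtsum : ∑ s', Pt h' s a s' = 1 := (hPt h' hh1 s a).2
      have hPssum : ∑ s', Pstar h' s a s' = 1 := (hPstar h' hh1 s a).2
      set c : ℝ := M / 2 with hcdef
      -- decomposition
      have e0 : ∀ s', (Pt h' s a s' - Pstar h' s a s')
            * (Vpi Pt rt polt (H - (h' + 1)) (h' + 1) s' - c)
          + Pstar h' s a s' * (Vpi Pt rt polt (H - (h' + 1)) (h' + 1) s'
              - Vstar Pstar r H (h' + 1) s')
          = Pt h' s a s' * Vpi Pt rt polt (H - (h' + 1)) (h' + 1) s'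
            - Pstar h' s a s' * Vstar Pstar r H (h' + 1) s'
            - (Pt h' s a s' * c - Pstar h' s a s' * c) := fun s' => by ring
      have e2 : (∑ s', (Pt h' s a s' - Pstar h' s a s')
            * (Vpi Pt rt polt (H - (h' + 1)) (h' + 1) s' - c))
          + ∑ s', Pstar h' s a s' * (Vpi Pt rt polt (H - (h' + 1)) (h' + 1) s'
              - Vstar Pstar r H (h' + 1) s')
          = (∑ s', Pt h' s a s' * Vpi Pt rt polt (H - (h' + 1)) (h' + 1) s')
            - (∑ s', Pstar h' s a s' * Vstar Pstar r H (h' + 1) s')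
            - ((∑ s', Pt h' s a s' * c) - ∑ s', Pstar h' s a s' * c) := by
        rw [← Finset.sum_add_distrib, Finset.sum_congr rfl fun s' _ => e0 s',
          Finset.sum_sub_distrib, Finset.sum_sub_distrib, Finset.sum_sub_distrib]
      have e3 : ∑ s', Pt h' s a s' * c = c := by rw [← Finset.sum_mul, hPtsum, one_mul]
      have e4 : ∑ s', Pstar h' s a s' * c = c := by rw [← Finset.sum_mul, hPssum, one_mul]
      have hdecomp : Qpi Pt rt polt H h' s a - Qstar Pstar r H h' s a
          = (rt h' s a - r h' s a)
            + (∑ s', (Pt h' s a s' - Pstar h' s a s')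
                * (Vpi Pt rt polt (H - (h' + 1)) (h' + 1) s' - c))
            + ∑ s', Pstar h' s a s' * (Vpi Pt rt polt (H - (h' + 1)) (h' + 1) s'
                - Vstar Pstar r H (h' + 1) s') := by
        simp only [Qpi, Qstar]
        rw [add_assoc, e2, e3, e4]
        ring
      -- bound the three terms
      have hterm1 : |rt h' s a - r h' s a| ≤ gapstar / (4 * H) := hrclose h' hh1 s a
      have hterm2 : |∑ s', (Pt h' s a s' - Pstar h' s a s')
          * (Vpi Pt rt polt (H - (h' + 1)) (h' + 1) s' - c)| ≤ gapstar / (4 * H) := by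
        calc |∑ s', (Pt h' s a s' - Pstar h' s a s')
              * (Vpi Pt rt polt (H - (h' + 1)) (h' + 1) s' - c)|
            ≤ ∑ s', |(Pt h' s a s' - Pstar h' s a s')
              * (Vpi Pt rt polt (H - (h' + 1)) (h' + 1) s' - c)| :=
              Finset.abs_sum_le_sum_abs _ _
          _ ≤ ∑ s', |Pt h' s a s' - Pstar h' s a s'| * c := by
              refine Finset.sum_le_sum fun s' _ => ?_
              rw [abs_mul]
              refine mul_le_mul_of_nonneg_left ?_ (abs_nonneg _)
              have hv := hVt s'
              rw [abs_le]
              constructor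
              · have := hv.1; rw [hcdef]; linarith
              · have := hv.2; rw [hcdef]; linarith
          _ = l1dist (Pt h' s a) (Pstar h' s a) * c := by
              rw [l1dist, ← Finset.sum_mul]
          _ ≤ gapstar / (2 * H * M) * c := by
              refine mul_le_mul_of_nonneg_right ?_ (by positivity)
              have := hPclose h' hh1 s a
              rwa [hMeq] at this
          _ = gapstar / (4 * H) := by
              rw [hcdef]
              field_simp
              ring
      have hterm3 : |∑ s', Pstar h' s a s' * (Vpi Pt rt polt (H - (h' + 1)) (h' + 1) s'
          - Vstar Pstar r H (h' + 1) s')| ≤ ((H : ℝ) - 2 - h') * gapstar / (2 * H) := by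
        calc |∑ s', Pstar h' s a s' * (Vpi Pt rt polt (H - (h' + 1)) (h' + 1) s'
              - Vstar Pstar r H (h' + 1) s')|
            ≤ ∑ s', |Pstar h' s a s' * (Vpi Pt rt polt (H - (h' + 1)) (h' + 1) s'
              - Vstar Pstar r H (h' + 1) s')| := Finset.abs_sum_le_sum_abs _ _
          _ ≤ ∑ s', Pstar h' s a s' * (((H : ℝ) - 2 - h') * gapstar / (2 * H)) := by
              refine Finset.sum_le_sum fun s' _ => ?_
              rw [abs_mul, abs_of_nonneg (hPsn h' hh1 s a s')]
              exact mul_le_mul_of_nonneg_left (hVdiff s') (hPsn h' hh1 s a s')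
          _ = ((H : ℝ) - 2 - h') * gapstar / (2 * H) := by
              rw [← Finset.sum_mul, hPssum, one_mul]
      have hsplit : |Qpi Pt rt polt H h' s a - Qstar Pstar r H h' s a|
          ≤ |rt h' s a - r h' s a|
            + |∑ s', (Pt h' s a s' - Pstar h' s a s')
                * (Vpi Pt rt polt (H - (h' + 1)) (h' + 1) s' - c)|
            + |∑ s', Pstar h' s a s' * (Vpi Pt rt polt (H - (h' + 1)) (h' + 1) s'
                - Vstar Pstar r H (h' + 1) s')| := by
        rw [hdecomp]
        exact (abs_add_le _ _).trans (add_le_add_left (abs_add_le _ _) _)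
      have hfinal : gapstar / (4 * H) + gapstar / (4 * H)
          + ((H : ℝ) - 2 - h') * gapstar / (2 * H)
          = ((H : ℝ) - 1 - h') * gapstar / (2 * H) := by
        field_simp
        ring
      linarith
  -- conclusion
  intro h hh s astar hastar a ha
  have hD := main (H - h - 1) h (by omega) s
  have h1 := abs_le.mp (hD astar)
  have h2 := abs_le.mp (hD a)
  have hQsup : (⨆ a', Qstar Pstar r H h s a') = Qstar Pstar r H h s astar :=
    le_antisymm (ciSup_le fun a' => hastar a')
      (le_ciSup ((Set.finite_range _).bddAbove) astar)
  have hg := hgap h hh s a ha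
  rw [hQsup] at hg
  have hhc : (h : ℝ) + 1 ≤ H := by exact_mod_cast hh
  constructor
  · have key : gapstar * ((h : ℝ) + 1) / H
        = gapstar - 2 * (((H : ℝ) - 1 - h) * gapstar / (2 * H)) := by
      field_simp
      ring
    rw [key]
    linarith [h1.1, h2.2]
  · exact div_pos (mul_pos hgap_pos (by positivity)) hHpos
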